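/- arXiv:2307.03390 — 3 statements merged into one kernel-verified Lean document; each statement's English description precedes it below -/
import Mathlib

section
/- The symplectic Grassmannian SGr(q, ℂ^{2n}) of q-dimensional isotropic subspaces of (ℂ^{2n}, J), viewed inside the Grassmannian Gr(q, ℂ^{2n}) via its Plücker embedding into ℙ(Λ^q ℂ^{2n}), is the intersection of Gr(q, ℂ^{2n}) with a projective linear subspace, namely the projectivization of the kernel of the linear map μ : Λ^q ℂ^{2n} → Λ^{q-2} ℂ^{2n}. -/
open Module

/-- The order-preserving embedding `Fin (q-2) → Fin q` skipping the two indices `i < j`. -/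
def skipTwo (q : ℕ) (i j : Fin q) (k : Fin (q - 2)) : Fin q :=
  ⟨if k.val < i.val then k.val else if k.val + 1 < j.val then k.val + 1 else k.val + 2, by
    have hk := k.isLt; have hj := j.isLt; split_ifs <;> omega⟩

/-- The wedge `u₁ ∧ ⋯ ∧ u_q`, as an element of the `q`-th exterior power `⋀[ℂ]^q V`;
this is the (homogeneous-coordinate) Plücker embedding of the span of `u₁,…,u_q`. -/
def wedgeP (q : ℕ) {V : Type*} [AddCommGroup V] [Module ℂ V] (u : Fin q → V) :
    ⋀[ℂ]^q V :=
  ⟨ExteriorAlgebra.ιMulti ℂ q u, ExteriorAlgebra.ιMulti_range ℂ q ⟨u, rfl⟩⟩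

lemma skipTwo_ne {q : ℕ} {i j : Fin q} (hij : i < j) (k : Fin (q - 2)) :
    skipTwo q i j k ≠ i ∧ skipTwo q i j k ≠ j := by
  have hij' : i.val < j.val := hij
  refine ⟨fun h => ?_, fun h => ?_⟩ <;>
  · have := congrArg Fin.val h
    simp only [skipTwo] at this
    split_ifs at this <;> omega

lemma skipTwo_inj {q : ℕ} {i j : Fin q} (hij : i < j) :
    Function.Injective (skipTwo q i j) := by
  intro k k' h
  have := congrArg Fin.val h
  simp only [skipTwo] at this
  apply Fin.ext
  split_ifs at this <;> omega

lemma skipTwo_surj {q : ℕ} {i j : Fin q} (hij : i < j) (l : Fin q)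
    (hli : l ≠ i) (hlj : l ≠ j) : ∃ k, skipTwo q i j k = l := by
  have hij' : i.val < j.val := hij
  have hjq := j.isLt
  have hlq := l.isLt
  have hli' : l.val ≠ i.val := fun h => hli (Fin.ext h)
  have hlj' : l.val ≠ j.val := fun h => hlj (Fin.ext h)
  refine ⟨⟨if l.val < i.val then l.val else if l.val < j.val then l.val - 1 else l.val - 2,
    by split_ifs <;> omega⟩, ?_⟩
  apply Fin.ext
  simp only [skipTwo]
  split_ifs <;> omega

/-- Coefficient-extraction lemma: if a linear combination of the `(q-2)`-fold wedges
`u ∘ skipTwo q i j` (over pairs `i < j`) vanishes, and `u` admits a dual family, then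
every coefficient vanishes. -/
lemma coeff_eq_zero {q : ℕ} {V : Type*} [AddCommGroup V] [Module ℂ V]
    (u : Fin q → V) (g : V →ₗ[ℂ] (Fin q → ℂ)) (hg : ∀ l, g (u l) = Pi.single l 1)
    (c : Fin q × Fin q → ℂ)
    (h : ∑ p ∈ Finset.univ.filter (fun p : Fin q × Fin q => p.1 < p.2),
        c p • ExteriorAlgebra.ιMulti ℂ (q - 2) (u ∘ skipTwo q p.1 p.2) = 0)
    (p₀ : Fin q × Fin q) (hp₀ : p₀.1 < p₀.2) : c p₀ = 0 := by
  classical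
  obtain ⟨i₀, j₀⟩ := p₀
  simp only at hp₀ ⊢
  -- the alternating map detecting the pair (i₀, j₀)
  set hmap : V →ₗ[ℂ] (Fin (q - 2) → ℂ) :=
    (LinearMap.funLeft ℂ ℂ (skipTwo q i₀ j₀)) ∘ₗ g with hmap_def
  set f : V [⋀^Fin (q - 2)]→ₗ[ℂ] ℂ :=
    (Matrix.detRowAlternating).compLinearMap hmap with hf_def
  set F : ∀ i, V [⋀^Fin i]→ₗ[ℂ] ℂ :=
    Function.update (fun _ => 0) (q - 2) f with hF_def
  have hFq : F (q - 2) = f := by simp [hF_def]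
  set L : ExteriorAlgebra ℂ V →ₗ[ℂ] ℂ := ExteriorAlgebra.liftAlternating F with hL_def
  have hL0 : L (∑ p ∈ Finset.univ.filter (fun p : Fin q × Fin q => p.1 < p.2),
      c p • ExteriorAlgebra.ιMulti ℂ (q - 2) (u ∘ skipTwo q p.1 p.2)) = 0 := by
    rw [h, map_zero]
  rw [map_sum] at hL0
  simp only [map_smul, hL_def, ExteriorAlgebra.liftAlternating_apply_ιMulti, hFq] at hL0
  -- evaluate f on each wedge
  have hval : ∀ (i j : Fin q), i < j →
      f (u ∘ skipTwo q i j) = if (i, j) = (i₀, j₀) then 1 else 0 := by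
    intro i j hij
    rw [hf_def, AlternatingMap.compLinearMap_apply]
    have hentry : ∀ b a : Fin (q - 2),
        hmap ((u ∘ skipTwo q i j) b) a =
          if skipTwo q i₀ j₀ a = skipTwo q i j b then 1 else 0 := by
      intro b a
      simp only [hmap_def, LinearMap.comp_apply, LinearMap.funLeft_apply, Function.comp_apply,
        hg (skipTwo q i j b), Pi.single_apply]
    by_cases hpair : (i, j) = (i₀, j₀)
    · obtain ⟨h1, h2⟩ := Prod.mk.injEq .. ▸ hpair
      subst h1; subst h2
      rw [if_pos rfl]
      have : (Matrix.of fun b => hmap ((u ∘ skipTwo q i j) b)) = (1 : Matrix _ _ ℂ) := by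
        ext b a
        rw [Matrix.of_apply, hentry b a, Matrix.one_apply]
        by_cases hba : b = a
        · subst hba; simp
        · rw [if_neg hba, if_neg (fun hc => hba (skipTwo_inj hij hc).symm)]
      show Matrix.det (Matrix.of fun b => hmap ((u ∘ skipTwo q i j) b)) = 1
      rw [this, Matrix.det_one]
    · rw [if_neg hpair]
      -- pick t ∈ {i₀, j₀} with t ∉ {i, j}
      have hii : i.val < j.val := hij
      have hkk : i₀.val < j₀.val := hp₀
      have hne : i.val ≠ i₀.val ∨ j.val ≠ j₀.val := by
        by_contra hc
        push_neg at hc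
        exact hpair (by rw [Prod.mk.injEq]; exact ⟨Fin.ext hc.1, Fin.ext hc.2⟩)
      have ht : ∃ t : Fin q, (t = i₀ ∨ t = j₀) ∧ t.val ≠ i.val ∧ t.val ≠ j.val := by
        by_cases h1 : i₀.val ≠ i.val ∧ i₀.val ≠ j.val
        · exact ⟨i₀, Or.inl rfl, h1⟩
        · refine ⟨j₀, Or.inr rfl, ?_, ?_⟩ <;> (push_neg at h1; omega)
      obtain ⟨t, hti₀j₀, hti, htj⟩ := ht
      obtain ⟨b, hb⟩ := skipTwo_surj hij t (fun h => hti (congrArg Fin.val h))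
        (fun h => htj (congrArg Fin.val h))
      show Matrix.det (Matrix.of fun b => hmap ((u ∘ skipTwo q i j) b)) = 0
      apply Matrix.det_eq_zero_of_row_eq_zero b
      intro a
      rw [Matrix.of_apply, hentry b a, hb, if_neg]
      intro hc
      rcases hti₀j₀ with h' | h'
      · exact (skipTwo_ne hp₀ a).1 (hc.trans h')
      · exact (skipTwo_ne hp₀ a).2 (hc.trans h')
  -- now the sum collapses
  have : ∑ p ∈ Finset.univ.filter (fun p : Fin q × Fin q => p.1 < p.2),
      c p • f (u ∘ skipTwo q p.1 p.2) = c (i₀, j₀) := by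
    rw [Finset.sum_eq_single (i₀, j₀)]
    · rw [hval i₀ j₀ hp₀, if_pos rfl, smul_eq_mul, mul_one]
    · intro p hp hne
      rw [Finset.mem_filter] at hp
      rw [hval p.1 p.2 hp.2, if_neg (by exact hne), smul_zero]
    · intro hn
      exact absurd (Finset.mem_filter.mpr ⟨Finset.mem_univ ((i₀, j₀) : Fin q × Fin q), hp₀⟩) hn
  rw [this] at hL0
  exact hL0

/-- The symplectic Grassmannian `SGr(q, ℂ^{2n})` of `q`-dimensional `J`-isotropic subspaces,
viewed inside `Gr(q, ℂ^{2n})` via the Plücker embedding into `ℙ(Λ^q ℂ^{2n})`, is the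
intersection of the Grassmannian with the projective linear subspace `ℙ(ker μ)`, where
`μ : Λ^q ℂ^{2n} → Λ^{q-2} ℂ^{2n}` is the skew-symmetrized contraction by `J`.  Stated at
the level of the affine cones of Plücker coordinate vectors. -/
theorem stmt1 (n q : ℕ) (hq1 : 2 ≤ q) (hq2 : q ≤ n)
    (J : LinearMap.BilinForm ℂ (Fin (2 * n) → ℂ))
    (hJalt : ∀ v, J v v = 0) (hJnd : J.Nondegenerate)
    (μ : (⋀[ℂ]^q (Fin (2 * n) → ℂ)) →ₗ[ℂ] (⋀[ℂ]^(q - 2) (Fin (2 * n) → ℂ)))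
    (hμ : ∀ u : Fin q → (Fin (2 * n) → ℂ),
      μ (wedgeP q u) =
        ∑ p ∈ Finset.univ.filter (fun p : Fin q × Fin q => p.1 < p.2),
          ((-1 : ℂ) ^ ((p.1 : ℕ) + (p.2 : ℕ) + 1) * J (u p.1) (u p.2)) •
            wedgeP (q - 2) (u ∘ skipTwo q p.1 p.2)) :
    {w : ⋀[ℂ]^q (Fin (2 * n) → ℂ) | ∃ u : Fin q → (Fin (2 * n) → ℂ),
        LinearIndependent ℂ u ∧ w = wedgeP q u ∧
        ∀ v ∈ Submodule.span ℂ (Set.range u), ∀ v' ∈ Submodule.span ℂ (Set.range u),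
          J v v' = 0} =
      {w : ⋀[ℂ]^q (Fin (2 * n) → ℂ) | ∃ u : Fin q → (Fin (2 * n) → ℂ),
        LinearIndependent ℂ u ∧ w = wedgeP q u} ∩ {w | μ w = 0} := by
  classical
  ext w
  simp only [Set.mem_setOf_eq, Set.mem_inter_iff]
  constructor
  · rintro ⟨u, hli, hw, hiso⟩
    refine ⟨⟨u, hli, hw⟩, ?_⟩
    rw [hw, hμ u]
    apply Finset.sum_eq_zero
    intro p _
    rw [hiso (u p.1) (Submodule.subset_span (Set.mem_range_self _))
        (u p.2) (Submodule.subset_span (Set.mem_range_self _)), mul_zero, zero_smul]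
  · rintro ⟨⟨u, hli, hw⟩, hker⟩
    refine ⟨u, hli, hw, ?_⟩
    -- get a dual family for u
    have hker' : LinearMap.ker (Fintype.linearCombination ℂ u) = ⊥ := by
      rw [LinearMap.ker_eq_bot']
      intro x hx
      rw [Fintype.linearCombination_apply] at hx
      ext i
      exact Fintype.linearIndependent_iff.mp hli x hx i
    obtain ⟨g, hg⟩ := (Fintype.linearCombination ℂ u).exists_leftInverse_of_injective hker'
    have hgu : ∀ l, g (u l) = Pi.single l 1 := by
      intro l
      have : Fintype.linearCombination ℂ u (Pi.single l 1) = u l := by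
        rw [Fintype.linearCombination_apply_single, one_smul]
      rw [← this, ← LinearMap.comp_apply, hg, LinearMap.id_apply]
    -- from μ w = 0 deduce vanishing of the sum in the exterior algebra
    rw [hw] at hker
    rw [hμ u] at hker
    have hsum0 : ∑ p ∈ Finset.univ.filter (fun p : Fin q × Fin q => p.1 < p.2),
        ((-1 : ℂ) ^ ((p.1 : ℕ) + (p.2 : ℕ) + 1) * J (u p.1) (u p.2)) •
          ExteriorAlgebra.ιMulti ℂ (q - 2) (u ∘ skipTwo q p.1 p.2) = 0 := by
      have := congrArg (Subtype.val) hker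
      rw [Submodule.coe_sum] at this
      simpa [wedgeP] using this
    -- each pair coefficient vanishes
    have hpair : ∀ i j : Fin q, i < j → J (u i) (u j) = 0 := by
      intro i j hij
      have := coeff_eq_zero u g hgu
        (fun p => (-1 : ℂ) ^ ((p.1 : ℕ) + (p.2 : ℕ) + 1) * J (u p.1) (u p.2)) hsum0 (i, j) hij
      simp only at this
      have hne : ((-1 : ℂ) ^ ((i : ℕ) + (j : ℕ) + 1)) ≠ 0 := by
        apply pow_ne_zero; norm_num
      exact (mul_eq_zero.mp this).resolve_left hne
    have hskew : ∀ x y, J x y = - J y x := by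
      intro x y
      have h1 := hJalt (x + y)
      simp only [map_add, LinearMap.add_apply, hJalt] at h1
      linear_combination h1
    have hall : ∀ a b : Fin q, J (u a) (u b) = 0 := by
      intro a b
      rcases lt_trichotomy a b with h | h | h
      · exact hpair a b h
      · subst h; exact hJalt _
      · rw [hskew]; rw [hpair b a h]; ring
    -- extend to span
    intro v hv v' hv'
    induction hv using Submodule.span_induction with
    | mem x hx =>
        obtain ⟨a, rfl⟩ := hx
        induction hv' using Submodule.span_induction with
        | mem y hy => obtain ⟨b, rfl⟩ := hy; exact hall a b
        | zero => simp
        | add y z _ _ hy hz => simp [hy, hz]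
        | smul c y _ hy => simp [hy]
    | zero => simp
    | add x y _ _ hx hy => simp [LinearMap.add_apply, hx, hy]
    | smul c x _ hx => simp [hx]
end

section
/- Let P be the point (x;y;z) = (0; I_{n−r}; 0) in local Harish–Chandra coordinates on Gr(n−r, ℂ^{2n}), where x, z are r×(n−r) complex matrices and y is an (n−r)×(n−r) complex matrix, the locus SGr(n−r, ℂ^{2n}) is defined by y − yᵗ + xᵗz − zᵗx = 0, and the locus Σ_r is defined additionally by I_{n−r} + x*x − y*y − z*z = 0. Then at P, the real tangent space of Σ_r and the complex tangent space of SGr satisfy T_P SGr = T_P Σ_r + J(T_P Σ_r), where J is the complex structure; i.e., Σ_r is a generic CR submanifold of SGr(n−r, ℂ^{2n}) at P. -/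
open Module Matrix

/-- At the point `P = (0; I_{n−r}; 0)` of `SGr(n−r, ℂ^{2n})` in Harish–Chandra coordinates
`(x;y;z)`, the tangent space of `SGr` is `{dy = dyᵗ}` and the (real) tangent space of the
CR submanifold `Σ_r` is `{dy = dyᵗ, dy = −dy*}`; one has
`T_P SGr = T_P Σ_r + J(T_P Σ_r)` where `J` is multiplication by `i`, i.e. `Σ_r` is a
generic CR submanifold of `SGr(n−r, ℂ^{2n})` at `P`. -/
theorem stmt5 (n r : ℕ) (hr : 0 < r) (hrn : r < n)
    (TS TSig : Submodule ℝ (Matrix (Fin r) (Fin (n - r)) ℂ ×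
      Matrix (Fin (n - r)) (Fin (n - r)) ℂ × Matrix (Fin r) (Fin (n - r)) ℂ))
    (hTS : ∀ w, w ∈ TS ↔ (w.2.1)ᵀ = w.2.1)
    (hTSig : ∀ w, w ∈ TSig ↔ (w.2.1)ᵀ = w.2.1 ∧ (w.2.1)ᴴ = -w.2.1) :
    TS = TSig ⊔ Submodule.map
      ((LinearMap.lsmul ℂ (Matrix (Fin r) (Fin (n - r)) ℂ ×
        Matrix (Fin (n - r)) (Fin (n - r)) ℂ × Matrix (Fin r) (Fin (n - r)) ℂ)
        Complex.I).restrictScalars ℝ) TSig := by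
  apply le_antisymm
  · intro w hw
    rw [hTS] at hw
    have hy : ∀ i j, w.2.1 j i = w.2.1 i j := by
      intro i j
      have := congrFun (congrFun hw j) i
      simpa [Matrix.transpose_apply] using this.symm
    set y := w.2.1 with hy'
    set a : Matrix (Fin (n - r)) (Fin (n - r)) ℂ :=
      (2⁻¹ : ℂ) • (y - yᴴ) with ha
    set b : Matrix (Fin (n - r)) (Fin (n - r)) ℂ :=
      ((2⁻¹ : ℂ) * (-Complex.I)) • (y + yᴴ) with hb
    rw [Submodule.mem_sup]
    refine ⟨(w.1, a, w.2.2), ?_, (0, Complex.I • b, 0), ?_, ?_⟩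
    · rw [hTSig]
      constructor
      · ext i j
        simp only [ha, Matrix.transpose_apply, Matrix.smul_apply, Matrix.sub_apply,
          Matrix.conjTranspose_apply, hy i j, smul_eq_mul]
      · ext i j
        simp only [ha, Matrix.conjTranspose_apply, Matrix.smul_apply, Matrix.sub_apply,
          Matrix.neg_apply, hy i j, smul_eq_mul, star_mul', star_sub, star_star, star_inv₀]
        push_cast
        ring_nf
        simp [Complex.conj_conj]
        ring
    · refine Submodule.mem_map.2 ⟨(0, b, 0), ?_, ?_⟩
      · rw [hTSig]
        constructor
        · ext i j
          simp only [hb, Matrix.transpose_apply, Matrix.smul_apply, Matrix.add_apply,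
            Matrix.conjTranspose_apply, hy i j, smul_eq_mul]
        · ext i j
          simp only [hb, Matrix.conjTranspose_apply, Matrix.smul_apply, Matrix.add_apply,
            Matrix.neg_apply, hy i j, smul_eq_mul, star_mul', star_add, star_star]
          simp [Complex.star_def, Complex.conj_I]
          ring
      · simp only [LinearMap.coe_restrictScalars, LinearMap.lsmul_apply, Prod.smul_mk,
          smul_zero]
    · have : a + Complex.I • b = y := by
        ext i j
        simp only [ha, hb, Matrix.add_apply, Matrix.smul_apply, Matrix.sub_apply,
          smul_eq_mul, Complex.I_mul_I, Matrix.conjTranspose_apply, hy i j]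
        ring_nf
        simp [Complex.I_sq]
        ring
      have hweq : w = (w.1, w.2.1, w.2.2) := rfl
      rw [hweq, Prod.ext_iff, Prod.ext_iff]
      refine ⟨by simp, by simpa using this, by simp⟩
  · rw [sup_le_iff]
    constructor
    · intro w hw
      rw [hTSig] at hw
      exact (hTS w).2 hw.1
    · intro w hw
      obtain ⟨v, hv, rfl⟩ := Submodule.mem_map.1 hw
      rw [hTSig] at hv
      rw [hTS]
      simp only [LinearMap.coe_restrictScalars, LinearMap.lsmul_apply, Prod.smul_snd,
        Prod.smul_fst, Matrix.transpose_smul, hv.1]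
end

section
/- Let U₀* be a q-dimensional complex vector space and Q₀ a 2(n−q)-dimensional complex vector space with 2 ≤ q < n. Consider the cone C = { λ⊗μ + λ⊙λ : λ ∈ U₀* \ {0}, μ ∈ Q₀ } ∪ {0} inside (U₀* ⊗ Q₀) ⊕ S²U₀*. Then the projectivization of C, namely ℂ(X) := ℙ(C \ {0}), contains the Segre variety ℙU₀* × ℙQ₀ (embedded via [λ]×[μ] ↦ [λ⊗μ]) in its topological closure, and the closure of ℂ(X) equals ℂ(X) ∪ (Segre variety). -/
open Module Matrix Filter

/-- Model of the VMRT cone of the symplectic Grassmannian: with `U₀*` of dimension `q` and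
`Q₀` of dimension `2(n−q)` (`2 ≤ q < n`), `λ⊗μ` and `λ⊙λ` realized as the rank-one matrices
`vecMulVec l μ` and `vecMulVec l l`, the cone
`C = { (λ⊗μ, λ⊙λ) : λ ≠ 0, μ } ∪ {0}` in `(U₀*⊗Q₀) ⊕ S²U₀*` has topological closure
`C ∪ { (λ⊗μ, 0) }`; in particular the Segre points `(λ⊗μ, 0)` all lie in the closure of `C`. -/
theorem stmt10 (n q : ℕ) (hq : 2 ≤ q) (hqn : q < n)
    (C : Set (Matrix (Fin q) (Fin (2 * (n - q))) ℂ × Matrix (Fin q) (Fin q) ℂ))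
    (hC : C = {w | w = 0 ∨ ∃ l : Fin q → ℂ, l ≠ 0 ∧ ∃ μ : Fin (2 * (n - q)) → ℂ,
        w = (Matrix.vecMulVec l μ, Matrix.vecMulVec l l)}) :
    (∀ (l : Fin q → ℂ) (μ : Fin (2 * (n - q)) → ℂ),
        (Matrix.vecMulVec l μ, (0 : Matrix (Fin q) (Fin q) ℂ)) ∈ closure C) ∧
      closure C = C ∪ {w | ∃ (l : Fin q → ℂ) (μ : Fin (2 * (n - q)) → ℂ),
        w = (Matrix.vecMulVec l μ, 0)} := by
  -- Part 1: Segre points lie in the closure.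
  have hseg : ∀ (l : Fin q → ℂ) (μ : Fin (2 * (n - q)) → ℂ),
      (Matrix.vecMulVec l μ, (0 : Matrix (Fin q) (Fin q) ℂ)) ∈ closure C := by
    intro l μ
    by_cases hl : l = 0
    · apply subset_closure
      rw [hC]
      left
      subst hl
      ext i j <;> simp [vecMulVec_apply]
    · -- approximate by points of the cone
      set c : ℕ → ℂ := fun k => (((1 : ℝ) / (k + 1) : ℝ) : ℂ) with hcdef
      have hc0 : Tendsto c atTop (nhds (0 : ℂ)) := by
        have := (Complex.continuous_ofReal.tendsto (0 : ℝ)).comp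
          tendsto_one_div_add_atTop_nhds_zero_nat
        simpa only [hcdef, Function.comp_def, Complex.ofReal_zero] using this
      have hcne : ∀ k, c k ≠ 0 := by
        intro k
        simp only [hcdef]
        rw [Ne, Complex.ofReal_eq_zero]
        positivity
      set f : ℕ → Matrix (Fin q) (Fin (2 * (n - q))) ℂ × Matrix (Fin q) (Fin q) ℂ :=
        fun k => (Matrix.vecMulVec l μ, (c k) ^ 2 • Matrix.vecMulVec l l) with hfdef
      have hmemf : ∀ k, f k ∈ C := by
        intro k
        rw [hC]
        right
        refine ⟨c k • l, smul_ne_zero (hcne k) hl, (c k)⁻¹ • μ, ?_⟩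
        have h1 : Matrix.vecMulVec l μ = Matrix.vecMulVec (c k • l) ((c k)⁻¹ • μ) := by
          ext i j
          simp only [vecMulVec_apply, Pi.smul_apply, smul_eq_mul]
          field_simp
          rw [eq_div_iff (hcne k)]
        have h2 : (c k) ^ 2 • Matrix.vecMulVec l l
            = Matrix.vecMulVec (c k • l) (c k • l) := by
          ext i j
          simp only [vecMulVec_apply, Pi.smul_apply, smul_eq_mul, Matrix.smul_apply]
          ring
        rw [hfdef]
        exact Prod.ext h1 h2
      have htend : Tendsto f atTop
          (nhds (Matrix.vecMulVec l μ, (0 : Matrix (Fin q) (Fin q) ℂ))) := by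
        have h2 : Tendsto (fun k => (c k) ^ 2 • Matrix.vecMulVec l l) atTop
            (nhds ((0 : ℂ) ^ 2 • Matrix.vecMulVec l l)) :=
          (hc0.pow 2).smul_const _
        have h2' : Tendsto (fun k => (c k) ^ 2 • Matrix.vecMulVec l l) atTop
            (nhds (0 : Matrix (Fin q) (Fin q) ℂ)) := by
          simpa using h2
        exact tendsto_const_nhds.prodMk_nhds h2'
      exact mem_closure_of_tendsto htend (Eventually.of_forall hmemf)
  refine ⟨hseg, ?_⟩
  -- Part 2: the closure is exactly C ∪ Segre.
  apply le_antisymm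
  · -- closure C ⊆ C ∪ Segre, via closed minor equations
    intro w hw
    have hident : ∀ (g : Matrix (Fin q) (Fin (2 * (n - q))) ℂ × Matrix (Fin q) (Fin q) ℂ → ℂ)
        (h : Matrix (Fin q) (Fin (2 * (n - q))) ℂ × Matrix (Fin q) (Fin q) ℂ → ℂ),
        Continuous g → Continuous h → (∀ v ∈ C, g v = h v) → g w = h w := by
      intro g h hg hh hgh
      have hcl : IsClosed {v : Matrix (Fin q) (Fin (2 * (n - q))) ℂ ×
          Matrix (Fin q) (Fin q) ℂ | g v = h v} := isClosed_eq hg hh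
      exact hcl.closure_subset_iff.mpr hgh hw
    obtain ⟨A, B⟩ := w
    have contA : ∀ (i : Fin q) (j : Fin (2 * (n - q))),
        Continuous (fun v : Matrix (Fin q) (Fin (2 * (n - q))) ℂ ×
          Matrix (Fin q) (Fin q) ℂ => v.1 i j) := by
      intro i j
      exact (continuous_apply j).comp ((continuous_apply i).comp continuous_fst)
    have contB : ∀ (i j : Fin q),
        Continuous (fun v : Matrix (Fin q) (Fin (2 * (n - q))) ℂ ×
          Matrix (Fin q) (Fin q) ℂ => v.2 i j) := by
      intro i j
      exact (continuous_apply j).comp ((continuous_apply i).comp continuous_snd)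
    have hAA : ∀ (i i' : Fin q) (j j' : Fin (2 * (n - q))),
        A i j * A i' j' = A i j' * A i' j := by
      intro i i' j j'
      refine hident _ _ ((contA i j).mul (contA i' j')) ((contA i j').mul (contA i' j)) ?_
      intro v hv
      rw [hC] at hv
      rcases hv with rfl | ⟨l, _, μ, rfl⟩
      · simp
      · show l i * μ j * (l i' * μ j') = l i * μ j' * (l i' * μ j); ring
    have hAB : ∀ (i i' : Fin q) (j : Fin (2 * (n - q))) (j' : Fin q),
        A i j * B i' j' = A i' j * B i j' := by
      intro i i' j j'
      refine hident _ _ ((contA i j).mul (contB i' j')) ((contA i' j).mul (contB i j')) ?_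
      intro v hv
      rw [hC] at hv
      rcases hv with rfl | ⟨l, _, μ, rfl⟩
      · simp
      · show l i * μ j * (l i' * l j') = l i' * μ j * (l i * l j'); ring
    have hBB : ∀ (i i' j j' : Fin q),
        B i j * B i' j' = B i j' * B i' j := by
      intro i i' j j'
      refine hident _ _ ((contB i j).mul (contB i' j')) ((contB i j').mul (contB i' j)) ?_
      intro v hv
      rw [hC] at hv
      rcases hv with rfl | ⟨l, _, μ, rfl⟩
      · simp
      · show l i * l j * (l i' * l j') = l i * l j' * (l i' * l j); ring
    have hsym : ∀ (i j : Fin q), B i j = B j i := by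
      intro i j
      refine hident _ _ (contB i j) (contB j i) ?_
      intro v hv
      rw [hC] at hv
      rcases hv with rfl | ⟨l, _, μ, rfl⟩
      · simp
      · simp only [vecMulVec_apply]; ring
    by_cases hB : B = 0
    · -- Segre part
      right
      subst hB
      by_cases hA : A = 0
      · exact ⟨0, 0, by subst hA; ext i j <;> simp [vecMulVec_apply]⟩
      · obtain ⟨i₀, hi₀⟩ := Function.ne_iff.mp hA
        obtain ⟨j₀, hj₀⟩ := Function.ne_iff.mp hi₀
        have hj₀' : A i₀ j₀ ≠ 0 := by simpa using hj₀
        refine ⟨fun i => A i j₀, fun j => A i₀ j / A i₀ j₀, ?_⟩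
        refine Prod.ext ?_ rfl
        ext i j
        simp only [vecMulVec_apply]
        have hkey := hAA i i₀ j₀ j
        field_simp
        linear_combination -hkey
    · -- cone part
      left
      rw [hC]
      right
      obtain ⟨i₀, hi₀⟩ := Function.ne_iff.mp hB
      obtain ⟨j₀, hj₀⟩ := Function.ne_iff.mp hi₀
      have hj₀' : B i₀ j₀ ≠ 0 := by simpa using hj₀
      have hd : B j₀ j₀ ≠ 0 := by
        intro h0
        have hk := hBB i₀ j₀ j₀ i₀
        rw [hsym j₀ i₀, h0] at hk
        simp only [mul_zero] at hk
        exact hj₀' (mul_self_eq_zero.mp hk)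
      obtain ⟨s, hs⟩ := IsAlgClosed.exists_pow_nat_eq (B j₀ j₀) (two_pos)
      have hsne : s ≠ 0 := by
        intro h0
        rw [h0] at hs
        exact hd (by rw [← hs]; ring)
      refine ⟨fun i => B i j₀ / s, ?_, fun j => A j₀ j / s, ?_⟩
      · intro h0
        have h0' := congrFun h0 j₀
        simp only [Pi.zero_apply, div_eq_zero_iff] at h0'
        rcases h0' with h | h
        · exact hd h
        · exact hsne h
      · refine Prod.ext ?_ ?_
        · ext i j
          simp only [vecMulVec_apply]
          have h1 := hAB i j₀ j j₀
          rw [div_mul_div_comm, eq_div_iff (mul_ne_zero hsne hsne)]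
          linear_combination h1 + A i j * hs
        · ext i j
          simp only [vecMulVec_apply]
          have h1 := hBB i j₀ j j₀
          rw [hsym j₀ j] at h1
          rw [div_mul_div_comm, eq_div_iff (mul_ne_zero hsne hsne)]
          linear_combination h1 + B i j * hs
  · -- C ∪ Segre ⊆ closure C
    rintro w (hw | ⟨l, μ, rfl⟩)
    · exact subset_closure hw
    · exact hseg l μ
end
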